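/- Let I be a homogeneous ideal of R = K[x_1,...,x_n] with no minimal generators in degree j+1. Then I_⟨j+1⟩ = I_⟨j⟩ ∩ M^{j+1}, and consequently the saturations of I_⟨j+1⟩ and I_⟨j⟩ with respect to M coincide. -/

import Mathlib

open MvPolynomial

noncomputable section

/-- The polynomial ring `R = K[x_1,…,x_n]`. -/
abbrev Rn (K : Type) [Field K] (n : ℕ) : Type := MvPolynomial (Fin n) K

/-- The irrelevant maximal ideal `M = (x_1,…,x_n)`. -/
def Mi (K : Type) [Field K] (n : ℕ) : Ideal (Rn K n) :=
  Ideal.span (Set.range (X : Fin n → Rn K n))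

variable {K : Type} [Field K] {n : ℕ}

/-- `I` is a homogeneous ideal. -/
def IsHomog (I : Ideal (Rn K n)) : Prop :=
  ∀ f ∈ I, ∀ j : ℕ, homogeneousComponent j f ∈ I

/-- `I_⟨j⟩`, the ideal generated by the degree-`j` forms in `I`. -/
def comp (I : Ideal (Rn K n)) (j : ℕ) : Ideal (Rn K n) :=
  Ideal.span {f | f ∈ I ∧ f.IsHomogeneous j}

/-- The saturation `I^sat = I : M^∞`. -/
def sat (I : Ideal (Rn K n)) : Ideal (Rn K n) :=
  ⨆ k : ℕ, I.colon ((Mi K n ^ k : Ideal (Rn K n)) : Set (Rn K n))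

/-- `I : g^∞`. -/
def colonInfty (I : Ideal (Rn K n)) (g : Rn K n) : Ideal (Rn K n) :=
  ⨆ k : ℕ, I.colon (Ideal.span {g ^ k})

/-- The initial degree (order) `o(I)` of a homogeneous ideal. -/
def order (I : Ideal (Rn K n)) : ℕ :=
  sInf {j | ∃ f ∈ I, f ≠ 0 ∧ f.IsHomogeneous j}

/-- The quadratic extension `S = R[M/ℓ] = ∪_k M^k/ℓ^k ⊆ R_ℓ`. -/
def quadExt (ℓ : Rn K n) : Subalgebra (Rn K n) (Localization.Away ℓ) :=
  Algebra.adjoin (Rn K n)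
    {x | ∃ m ∈ Mi K n,
      x * algebraMap (Rn K n) (Localization.Away ℓ) ℓ =
        algebraMap (Rn K n) (Localization.Away ℓ) m}

/-- The contraction `IS ∩ R` of `I` from `S = R[M/ℓ]`. -/
def contraction (I : Ideal (Rn K n)) (ℓ : Rn K n) : Ideal (Rn K n) :=
  Ideal.comap (algebraMap (Rn K n) (quadExt ℓ))
    (Ideal.map (algebraMap (Rn K n) (quadExt ℓ)) I)

/-- `I` is contracted (from a quadratic extension). -/
def IsContracted (I : Ideal (Rn K n)) : Prop :=
  ∃ ℓ : Rn K n, ℓ ≠ 0 ∧ ℓ.IsHomogeneous 1 ∧ I = contraction I ℓ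

/-- `I` is `M`-full. -/
def IsMFull (I : Ideal (Rn K n)) : Prop :=
  ∃ ℓ : Rn K n, ℓ ≠ 0 ∧ ℓ.IsHomogeneous 1 ∧ (I * Mi K n).colon (Ideal.span {ℓ}) = I

/-- The minimal number of generators `μ(I)`. -/
def mu (I : Ideal (Rn K n)) : ℕ :=
  sInf {k | ∃ s : Finset (Rn K n), s.card = k ∧ Ideal.span (s : Set (Rn K n)) = I}

/-- The integral closure of an ideal, as a set: elements satisfying an equation
`a^t + r_1 a^{t-1} + … + r_t = 0` with `r_i ∈ I^i`. -/
def intClo {A : Type} [CommRing A] (I : Ideal A) : Set A :=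
  {a | ∃ (t : ℕ) (r : ℕ → A), 0 < t ∧ (∀ i, 1 ≤ i → i ≤ t → r i ∈ I ^ i) ∧
    a ^ t + ∑ i ∈ Finset.Icc 1 t, r i * a ^ (t - i) = 0}

/-- `I` is integrally closed. -/
def IsIC {A : Type} [CommRing A] (I : Ideal A) : Prop :=
  ∀ a ∈ intClo I, a ∈ I

/-- The class `C`: finite-colength homogeneous ideals with `I + (ℓ) = M^{o(I)} + (ℓ)`
for some nonzero linear form `ℓ`, which are contracted. -/
def InC (I : Ideal (Rn K n)) : Prop :=
  IsHomog I ∧ (∃ m : ℕ, Mi K n ^ m ≤ I) ∧ IsContracted I ∧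
    ∃ ℓ : Rn K n, ℓ ≠ 0 ∧ ℓ.IsHomogeneous 1 ∧
      I + Ideal.span {ℓ} = Mi K n ^ order I + Ideal.span {ℓ}

/-- `(b, dg, φ, π)` is a graded free resolution of the homogeneous ideal `J`:
the `i`-th free module has basis `Fin (b i)` with generators in degrees `dg i`,
the maps are given by matrices with homogeneous entries of the appropriate degrees,
and the complex is exact. -/
def IsGradedRes (J : Ideal (Rn K n)) (b : ℕ → ℕ) (dg : (i : ℕ) → Fin (b i) → ℕ)
    (φ : (i : ℕ) → Matrix (Fin (b i)) (Fin (b (i + 1))) (Rn K n))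
    (π : Fin (b 0) → Rn K n) : Prop :=
  (∀ c, π c ∈ J) ∧ (∀ c, (π c).IsHomogeneous (dg 0 c)) ∧
    J = Ideal.span (Set.range π) ∧
    (∀ i r c, (φ i) r c = 0 ∨ ∃ e, ((φ i) r c).IsHomogeneous e ∧ dg i r + e = dg (i + 1) c) ∧
    LinearMap.ker (Matrix.mulVecLin (Matrix.of fun (_ : Fin 1) c => π c)) =
      LinearMap.range (Matrix.mulVecLin (φ 0)) ∧
    ∀ i, LinearMap.ker (Matrix.mulVecLin (φ i)) = LinearMap.range (Matrix.mulVecLin (φ (i + 1)))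

/-- `reg J ≤ m`: `J` admits a graded free resolution with `i`-th shifts at most `m + i`. -/
def RegLE (J : Ideal (Rn K n)) (m : ℕ) : Prop :=
  ∃ b dg φ π, IsGradedRes J b dg φ π ∧ ∀ i c, dg i c ≤ m + i

/-- The Castelnuovo–Mumford regularity of a homogeneous ideal. -/
def regId (J : Ideal (Rn K n)) : ℕ := sInf {m | RegLE J m}

/-- `J` has a linear resolution (generated in degree `d` with `i`-th syzygies in degree `d+i`). -/
def HasLinRes (J : Ideal (Rn K n)) (d : ℕ) : Prop :=
  ∃ b dg φ π, IsGradedRes J b dg φ π ∧ ∀ i c, dg i c = d + i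

/-- `I` is componentwise linear. -/
def CompLinear (I : Ideal (Rn K n)) : Prop :=
  ∀ d : ℕ, HasLinRes (comp I d) d


-- AUXILIARY LEMMAS (to be inserted above stmt3)

lemma degree_add' (a b : Fin n →₀ ℕ) : (a + b).degree = a.degree + b.degree := by
  simp [Finsupp.degree_eq_weight_one, map_add]

theorem hc_mul_homog (p g : Rn K n) {m d : ℕ} (hg : g.IsHomogeneous m)
    (hmd : m ≤ d) :
    homogeneousComponent d (p * g) = homogeneousComponent (d - m) p * g := by
  ext u
  rw [coeff_homogeneousComponent, coeff_mul, coeff_mul]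
  split_ifs with h
  · refine Finset.sum_congr rfl fun x hx => ?_
    rw [coeff_homogeneousComponent]
    rcases eq_or_ne (coeff x.2 g) 0 with h2 | h2
    · simp [h2]
    · have hw : x.2.degree = m := by
        have := hg h2; rwa [Finsupp.degree_eq_weight_one]
      have hx' : x.1 + x.2 = u := Finset.HasAntidiagonal.mem_antidiagonal.mp hx
      have : x.1.degree = d - m := by
        have : x.1.degree + x.2.degree = u.degree := by rw [← hx', degree_add']
        omega
      rw [if_pos this]
  · refine (Finset.sum_eq_zero fun x hx => ?_).symm
    rw [coeff_homogeneousComponent]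
    rcases eq_or_ne (coeff x.2 g) 0 with h2 | h2
    · simp [h2]
    · have hw : x.2.degree = m := by have := hg h2; rwa [Finsupp.degree_eq_weight_one]
      have hx' : x.1 + x.2 = u := Finset.HasAntidiagonal.mem_antidiagonal.mp hx
      have hdu : x.1.degree + x.2.degree = u.degree := by rw [← hx', degree_add']
      rw [if_neg (by omega), zero_mul]

theorem hc_mul_homog_zero (p g : Rn K n) {m d : ℕ} (hg : g.IsHomogeneous m)
    (hmd : d < m) :
    homogeneousComponent d (p * g) = 0 := by
  ext u
  rw [coeff_homogeneousComponent, coeff_zero]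
  split_ifs with h
  · rw [coeff_mul]
    refine Finset.sum_eq_zero fun x hx => ?_
    rcases eq_or_ne (coeff x.2 g) 0 with h2 | h2
    · simp [h2]
    · have hw : x.2.degree = m := by have := hg h2; rwa [Finsupp.degree_eq_weight_one]
      have hx' : x.1 + x.2 = u := Finset.HasAntidiagonal.mem_antidiagonal.mp hx
      have hdu : x.1.degree + x.2.degree = u.degree := by rw [← hx', degree_add']
      omega
  · rfl

/-- A homogeneous polynomial of degree `d` lies in `M^d`. -/
theorem homog_mem_Mi_pow : ∀ (d : ℕ) (f : Rn K n), f.IsHomogeneous d → f ∈ Mi K n ^ d := by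
  intro d
  induction d with
  | zero => intro f _; simp
  | succ d ih =>
    intro f hf
    rw [f.as_sum]
    refine Submodule.sum_mem _ fun u hu => ?_
    have hdeg : u.degree = d + 1 := by
      have := hf (MvPolynomial.mem_support_iff.mp hu)
      rwa [Finsupp.degree_eq_weight_one]
    have hune : u ≠ 0 := by
      intro h0; rw [h0] at hdeg; simp [map_zero] at hdeg
    obtain ⟨i, hi⟩ : ∃ i, u i ≠ 0 := by
      by_contra hc
      push_neg at hc
      exact hune (Finsupp.ext fun i => hc i)
    have hle : Finsupp.single i 1 ≤ u := by
      rw [Finsupp.single_le_iff]; omega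
    set u' := u - Finsupp.single i 1 with hu'
    have husum : Finsupp.single i 1 + u' = u := add_tsub_cancel_of_le hle
    have hdeg' : u'.degree = d := by
      have := degree_add' (Finsupp.single i 1) u'
      rw [husum] at this
      have h1 : (Finsupp.single i 1).degree = 1 := by
        exact Finsupp.degree_single i 1
      omega
    have : (monomial u) (coeff u f) = X i * (monomial u') (coeff u f) := by
      rw [X, monomial_mul, one_mul, husum]
    rw [this, pow_succ']
    exact Ideal.mul_mem_mul (Ideal.subset_span ⟨i, rfl⟩)
      (ih _ (isHomogeneous_monomial _ hdeg'))

/-- A homogeneous polynomial of positive degree lies in `M`. -/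
theorem homog_mem_Mi {f : Rn K n} {e : ℕ} (he : 0 < e) (hf : f.IsHomogeneous e) :
    f ∈ Mi K n :=
  Ideal.pow_le_self he.ne' (homog_mem_Mi_pow e f hf)
theorem compA (I : Ideal (Rn K n)) (hI : IsHomog I) (j : ℕ)
    (hnogen : ∀ f ∈ I, f.IsHomogeneous (j + 1) → f ∈ Mi K n * I) :
    comp I (j + 1) ≤ comp I j := by
  rw [comp, Ideal.span_le]
  rintro f ⟨hfI, hfh⟩
  have hMI := hnogen f hfI hfh
  have hfix : homogeneousComponent (j + 1) f = f := by
    rw [homogeneousComponent_of_mem ((mem_homogeneousSubmodule _ _).mpr hfh), if_pos rfl]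
  have key : ∀ p ∈ Mi K n * I, homogeneousComponent (j + 1) p ∈ comp I j := by
    intro p hp
    refine Submodule.mul_induction_on hp ?_ ?_
    · intro m hm g hg
      obtain ⟨c, hc⟩ := Finsupp.mem_span_range_iff_exists_finsupp.mp hm
      have hmg : m * g = c.sum fun i a => (a * g) * X i := by
        rw [← hc, Finsupp.sum_mul]
        exact Finsupp.sum_congr fun i _ => by rw [smul_eq_mul]; ring
      rw [hmg, map_finsuppSum]
      refine Submodule.sum_mem _ fun i _ => ?_
      dsimp only
      rw [hc_mul_homog _ _ (isHomogeneous_X _ _) (by omega)]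
      have hj : j + 1 - 1 = j := rfl
      rw [hj]
      exact Ideal.mul_mem_right _ _ (Ideal.subset_span
        ⟨hI _ (I.mul_mem_left _ hg) j, homogeneousComponent_isHomogeneous j _⟩)
    · intro x y hx hy; rw [map_add]; exact add_mem hx hy
  rw [← hfix]; exact key f hMI

theorem hc_eq_zero_of_mem_pow :
    ∀ (k : ℕ) (f : Rn K n), f ∈ Mi K n ^ k → ∀ d < k, homogeneousComponent d f = 0 := by
  intro k
  induction k with
  | zero => intro f _ d hd; omega
  | succ k ih =>
    intro f hf d hd
    rw [pow_succ] at hf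
    refine Submodule.mul_induction_on hf ?_ ?_
    · intro g hg m hm
      obtain ⟨c, hc⟩ := Finsupp.mem_span_range_iff_exists_finsupp.mp hm
      have hgm : g * m = c.sum fun i a => (a * g) * X i := by
        rw [← hc, Finsupp.mul_sum]
        exact Finsupp.sum_congr fun i _ => by rw [smul_eq_mul]; ring
      rw [hgm, map_finsuppSum, Finsupp.sum]
      refine Finset.sum_eq_zero fun i _ => ?_
      rcases Nat.eq_zero_or_pos d with h0 | hpos
      · subst h0; exact hc_mul_homog_zero _ _ (isHomogeneous_X _ _) one_pos
      · rw [hc_mul_homog _ _ (isHomogeneous_X _ _) hpos,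
          ih _ (Ideal.mul_mem_left _ _ hg) (d - 1) (by omega), zero_mul]
    · intro x y hx hy; rw [map_add, hx, hy, add_zero]

theorem compB (I : Ideal (Rn K n)) (j : ℕ) :
    comp I j ⊓ Mi K n ^ (j + 1) ≤ Mi K n * comp I j := by
  rintro f ⟨hf1, hf2⟩
  rw [← sum_homogeneousComponent f]
  refine Submodule.sum_mem _ fun d _ => ?_
  rcases lt_or_ge d (j + 1) with hlt | hge
  · rw [hc_eq_zero_of_mem_pow _ f hf2 d hlt]; exact zero_mem _
  · rw [comp] at hf1
    obtain ⟨c, hsupp, hsum⟩ := Submodule.mem_span_set.mp hf1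
    rw [← hsum, map_finsuppSum, Finsupp.sum]
    refine Submodule.sum_mem _ fun g hg => ?_
    obtain ⟨hgI, hgh⟩ := hsupp hg
    rw [smul_eq_mul, hc_mul_homog _ _ hgh (by omega)]
    exact Ideal.mul_mem_mul
      (homog_mem_Mi (by omega) (homogeneousComponent_isHomogeneous (d - j) _))
      (Ideal.subset_span ⟨hgI, hgh⟩)

theorem compC (I : Ideal (Rn K n)) (j : ℕ) : Mi K n * comp I j ≤ comp I (j + 1) := by
  rw [Ideal.mul_le]
  intro m hm g hg
  induction hg using Submodule.span_induction with
  | mem g hgS =>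
    obtain ⟨hgI, hgh⟩ := hgS
    obtain ⟨c, hc⟩ := Finsupp.mem_span_range_iff_exists_finsupp.mp hm
    have hmg : m * g = c.sum fun i a => a * (X i * g) := by
      rw [← hc, Finsupp.sum_mul]
      exact Finsupp.sum_congr fun i _ => by rw [smul_eq_mul]; ring
    rw [hmg, Finsupp.sum]
    refine Submodule.sum_mem _ fun i _ => ?_
    refine Ideal.mul_mem_left _ _ (Ideal.subset_span ⟨I.mul_mem_left _ hgI, ?_⟩)
    have := (isHomogeneous_X (R := K) i).mul hgh
    rwa [add_comm] at this
  | zero => rw [mul_zero]; exact zero_mem _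
  | add x y _ _ hx hy => rw [mul_add]; exact add_mem hx hy
  | smul r x _ hx => rw [smul_eq_mul, ← mul_assoc, mul_comm m r, mul_assoc]
                     exact Ideal.mul_mem_left _ _ hx

theorem stmt3' (K : Type) [Field K] (n : ℕ) (I : Ideal (Rn K n)) (hI : IsHomog I) (j : ℕ)
    (hnogen : ∀ f ∈ I, f.IsHomogeneous (j + 1) → f ∈ Mi K n * I) :
    comp I (j + 1) = comp I j ⊓ Mi K n ^ (j + 1) ∧
      sat (comp I (j + 1)) = sat (comp I j) := by
  have part1 : comp I (j + 1) = comp I j ⊓ Mi K n ^ (j + 1) := by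
    refine le_antisymm (le_inf (compA I hI j hnogen) ?_)
      (fun f hf => compC I j (compB I j hf))
    rw [comp, Ideal.span_le]
    rintro f ⟨_, hfh⟩
    exact homog_mem_Mi_pow _ f hfh
  have hle : comp I (j + 1) ≤ comp I j := part1 ▸ inf_le_left
  refine ⟨part1, le_antisymm ?_ ?_⟩
  · refine iSup_le fun k => le_trans ?_ (le_iSup _ k)
    intro r hr
    rw [Submodule.mem_colon] at hr ⊢
    exact fun p hp => hle (hr p hp)
  · refine iSup_le fun k => le_trans ?_
      (le_iSup (fun k => (comp I (j + 1)).colon ((Mi K n ^ k : Ideal (Rn K n)) : Set (Rn K n))) (k + (j + 1)))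
    intro r hr
    rw [Submodule.mem_colon] at hr ⊢
    intro p hp
    rw [part1]
    refine ⟨hr p (Ideal.pow_le_pow_right (by omega) hp), ?_⟩
    rw [smul_eq_mul]
    exact Ideal.mul_mem_left _ r (Ideal.pow_le_pow_right (by omega) hp)

/-- if `I` has no minimal generators in degree `j+1`, then
`I_⟨j+1⟩ = I_⟨j⟩ ∩ M^{j+1}` and the saturations of `I_⟨j+1⟩` and `I_⟨j⟩` coincide. -/
theorem stmt3 (K : Type) [Field K] (n : ℕ) (I : Ideal (Rn K n)) (hI : IsHomog I) (j : ℕ)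
    (hnogen : ∀ f ∈ I, f.IsHomogeneous (j + 1) → f ∈ Mi K n * I) :
    comp I (j + 1) = comp I j ⊓ Mi K n ^ (j + 1) ∧
      sat (comp I (j + 1)) = sat (comp I j) := by
  exact stmt3' K n I hI j hnogen

end
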